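/- Let H = (1/m) Σ_{i=1}^m (I − P̃_i) be a uniform stoquastic k-local Hamiltonian with k ≥ 2, let x ∈ Σ^n, and let L_1, …, L_ℓ be layers, where each L_t is a set of indices in {1,…,m} whose qudit sets are pairwise disjoint and L_t applied to a vector means multiplying by the product of the projectors {P̃_i : i ∈ L_t}. If supp(L_ℓ ⋯ L_1 |x⟩) contains a bad string for H, then there exist a bad string y for H and a walk in the graph G(H) from x to y of length at most Σ_{j=2}^{ℓ+1} k^j. -/

import Mathlib

open Matrix

/-- A uniform stoquastic `k`-local term on strings in `Σ^n`: a set `Q` of at most `k` qudits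
together with a finite family of pairwise disjoint nonempty subsets of `Σ^Q`. -/
structure UTerm (A : Type) [Fintype A] [DecidableEq A] (n k : ℕ) where
  Q : Finset (Fin n)
  hQ : Q.card ≤ k
  J : ℕ
  T : Fin J → Finset ({ i : Fin n // i ∈ Q } → A)
  hT : ∀ j, (T j).Nonempty
  hdisj : ∀ j j', j ≠ j' → Disjoint (T j) (T j')

variable {A : Type} [Fintype A] [DecidableEq A] {n k : ℕ}

/-- The string equal to `t` on `Q` and to `z` on `Qᶜ`. -/
def glue (Q : Finset (Fin n)) (t : { i : Fin n // i ∈ Q } → A)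
    (z : { i : Fin n // i ∉ Q } → A) : Fin n → A :=
  fun i => if h : i ∈ Q then t ⟨i, h⟩ else z ⟨i, h⟩

/-- The subset state `|T_j , z⟩` of a local term. -/
noncomputable def UTerm.tvec (P : UTerm A n k) (j : Fin P.J)
    (z : { i : Fin n // i ∉ P.Q } → A) : (Fin n → A) → ℂ :=
  ((Real.sqrt (P.T j).card : ℂ))⁻¹ •
    (∑ t ∈ P.T j, Pi.single (glue P.Q t z) (1 : ℂ) : (Fin n → A) → ℂ)

/-- The groundspace projector `P̃ = Σ_j Σ_z |T_j,z⟩⟨T_j,z|` of a uniform stoquastic local term. -/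
noncomputable def UTerm.proj (P : UTerm A n k) : Matrix (Fin n → A) (Fin n → A) ℂ :=
  ∑ j : Fin P.J, ∑ z : { i : Fin n // i ∉ P.Q } → A,
    vecMulVec (P.tvec j z) (star (P.tvec j z))

/-- The uniform stoquastic local Hamiltonian `H = (1/m) Σᵢ (I - P̃ᵢ)`. -/
noncomputable def ham {m : ℕ} (terms : Fin m → UTerm A n k) :
    Matrix (Fin n → A) (Fin n → A) ℂ :=
  ((m : ℂ))⁻¹ • ∑ i, (1 - (terms i).proj)

/-- A string is bad for `H` if its diagonal entry in some groundspace projector vanishes. -/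
def Bad {m : ℕ} (terms : Fin m → UTerm A n k) (x : Fin n → A) : Prop :=
  ∃ i, (terms i).proj x x = 0

/-- `H` is `ε`-frustrated: every unit vector has energy at least `ε`. -/
def Frustrated {m : ℕ} (terms : Fin m → UTerm A n k) (ε : ℝ) : Prop :=
  ∀ ψ : (Fin n → A) → ℂ, ∑ x, ‖ψ x‖ ^ 2 = 1 →
    ε ≤ (star ψ ⬝ᵥ (ham terms).mulVec ψ).re

/-- Every qudit lies in at most `d` of the sets `Qᵢ`. -/
def DegreeBound {m : ℕ} (terms : Fin m → UTerm A n k) (d : ℕ) : Prop :=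
  ∀ q : Fin n, (Finset.univ.filter (fun i => q ∈ (terms i).Q)).card ≤ d

/-- The subset state of a finite set `S`. -/
noncomputable def subsetState {X : Type} [DecidableEq X] (S : Finset X) : X → ℂ :=
  fun x => if x ∈ S then ((Real.sqrt S.card : ℂ))⁻¹ else 0

/-- A walk of length `r` in the graph `G(H)`: consecutive strings are connected by some
groundspace projector with a positive matrix entry. -/
def WalkLen {A : Type} [Fintype A] [DecidableEq A] {n k m : ℕ}
    (terms : Fin m → UTerm A n k) (x y : Fin n → A) (r : ℕ) : Prop :=
  ∃ w : Fin (r + 1) → (Fin n → A), w 0 = x ∧ w (Fin.last r) = y ∧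
    ∀ t : Fin r, ∃ i, 0 < ((terms i).proj (w t.castSucc) (w t.succ)).re


namespace Stmt13Aux

variable {A : Type} [Fintype A] [DecidableEq A] {n k m : ℕ}

/-- restriction of a string to `Q`. -/
def rst (Q : Finset (Fin n)) (u : Fin n → A) : { i : Fin n // i ∈ Q } → A := fun i => u i.1

/-- restriction of a string to the complement of `Q`. -/
def ext (Q : Finset (Fin n)) (u : Fin n → A) : { i : Fin n // i ∉ Q } → A := fun i => u i.1

lemma glue_rst_ext (Q : Finset (Fin n)) (u : Fin n → A) : glue Q (rst Q u) (ext Q u) = u := by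
  funext i; unfold glue rst ext; split <;> rfl

lemma glue_eq_iff {Q : Finset (Fin n)} {t : { i : Fin n // i ∈ Q } → A}
    {z : { i : Fin n // i ∉ Q } → A} {u : Fin n → A} :
    glue Q t z = u ↔ t = rst Q u ∧ z = ext Q u := by
  constructor
  · rintro rfl
    constructor
    · funext i; simp [rst, glue, i.2]
    · funext i; simp [ext, glue, i.2]
  · rintro ⟨rfl, rfl⟩; exact glue_rst_ext Q u

lemma tvec_apply (P : UTerm A n k) (j : Fin P.J) (z : { i : Fin n // i ∉ P.Q } → A)
    (u : Fin n → A) :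
    P.tvec j z u = if rst P.Q u ∈ P.T j ∧ z = ext P.Q u
      then ((Real.sqrt (P.T j).card : ℂ))⁻¹ else 0 := by
  unfold UTerm.tvec
  simp only [Pi.smul_apply, Finset.sum_apply, smul_eq_mul, Pi.single_apply]
  have h1 : ∀ t, (u = glue P.Q t z) ↔ (t = rst P.Q u ∧ z = ext P.Q u) := by
    intro t; rw [eq_comm]; exact glue_eq_iff
  rw [Finset.sum_congr rfl (fun t _ => if_congr (h1 t) rfl rfl)]
  by_cases hz : z = ext P.Q u
  · simp only [hz, and_true]
    rw [Finset.sum_ite_eq' (P.T j) (rst P.Q u) (fun _ => (1 : ℂ))]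
    by_cases ht : rst P.Q u ∈ P.T j <;> simp [ht, hz]
  · simp [hz]

/-- the real value of an entry of the projector. -/
noncomputable def rproj (P : UTerm A n k) (u v : Fin n → A) : ℝ :=
  ∑ j : Fin P.J, if rst P.Q u ∈ P.T j ∧ rst P.Q v ∈ P.T j ∧ ext P.Q u = ext P.Q v
    then (((P.T j).card : ℝ))⁻¹ else 0

lemma proj_eq (P : UTerm A n k) (u v : Fin n → A) :
    P.proj u v = ((rproj P u v : ℝ) : ℂ) := by
  unfold UTerm.proj rproj
  rw [Complex.ofReal_sum]
  simp only [Matrix.sum_apply, vecMulVec_apply, Pi.star_apply, tvec_apply]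
  refine Finset.sum_congr rfl fun j _ => ?_
  have hcard : (0 : ℝ) < ((P.T j).card : ℝ) := by
    exact_mod_cast Finset.card_pos.mpr (P.hT j)
  have hs : ((Real.sqrt (P.T j).card : ℂ))⁻¹ * star ((Real.sqrt (P.T j).card : ℂ))⁻¹
      = (((P.T j).card : ℝ) : ℂ)⁻¹ := by
    rw [Complex.star_def, ← Complex.ofReal_inv, Complex.conj_ofReal, ← Complex.ofReal_inv,
      ← Complex.ofReal_mul, ← mul_inv, Real.mul_self_sqrt (le_of_lt hcard)]
  by_cases h1 : rst P.Q u ∈ P.T j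
  · by_cases h2 : rst P.Q v ∈ P.T j
    · by_cases h3 : ext P.Q u = ext P.Q v
      · simp only [h1, h2, h3, true_and, and_true, if_true]
        rw [← h3]
        have hstep : ∀ z : { i : Fin n // i ∉ P.Q } → A,
            ((if z = ext P.Q u then ((Real.sqrt (P.T j).card : ℂ))⁻¹ else 0) *
              star (if z = ext P.Q u then ((Real.sqrt (P.T j).card : ℂ))⁻¹ else 0))
            = if z = ext P.Q u then ((((P.T j).card : ℝ)) : ℂ)⁻¹ else 0 := by
          intro z
          split
          · exact hs
          · simp
        rw [Finset.sum_congr rfl fun z _ => hstep z,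
          Finset.sum_ite_eq' Finset.univ (ext P.Q u) fun _ => ((((P.T j).card : ℝ)) : ℂ)⁻¹]
        simp
      · simp only [h1, h2, h3, true_and, and_true, and_false, if_false, Complex.ofReal_zero]
        apply Finset.sum_eq_zero
        intro z _
        by_cases hu : z = ext P.Q u
        · rw [if_neg (fun hv : z = ext P.Q v => h3 (hu.symm.trans hv)), star_zero, mul_zero]
        · rw [if_neg hu, zero_mul]
    · simp only [h2, false_and, and_false, if_false, star_zero, mul_zero,
        Finset.sum_const_zero, Complex.ofReal_zero]
  · simp only [h1, false_and, if_false, zero_mul, Finset.sum_const_zero, Complex.ofReal_zero]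

lemma rproj_nonneg (P : UTerm A n k) (u v : Fin n → A) : 0 ≤ rproj P u v := by
  apply Finset.sum_nonneg
  intro j _
  split
  · positivity
  · exact le_refl 0

lemma rproj_pos_iff (P : UTerm A n k) (u v : Fin n → A) :
    0 < rproj P u v ↔ ∃ j, rst P.Q u ∈ P.T j ∧ rst P.Q v ∈ P.T j ∧ ext P.Q u = ext P.Q v := by
  constructor
  · intro h
    by_contra hall
    push_neg at hall
    have hz : rproj P u v = 0 := by
      apply Finset.sum_eq_zero
      intro j _
      rw [if_neg]
      rintro ⟨a, b, c⟩
      exact hall j a b c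
    rw [hz] at h
    exact lt_irrefl 0 h
  · rintro ⟨j, hj⟩
    apply Finset.sum_pos'
    · intro i _
      split
      · positivity
      · exact le_refl 0
    · refine ⟨j, Finset.mem_univ j, ?_⟩
      rw [if_pos hj]
      have hcard : (0 : ℝ) < ((P.T j).card : ℝ) := by
        exact_mod_cast Finset.card_pos.mpr (P.hT j)
      positivity

lemma proj_ne_iff (P : UTerm A n k) (u v : Fin n → A) :
    P.proj u v ≠ 0 ↔
      ∃ j, rst P.Q u ∈ P.T j ∧ rst P.Q v ∈ P.T j ∧ ext P.Q u = ext P.Q v := by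
  rw [proj_eq, ← rproj_pos_iff, Ne, Complex.ofReal_eq_zero]
  constructor
  · intro h
    exact lt_of_le_of_ne (rproj_nonneg P u v) (Ne.symm h)
  · intro h
    exact ne_of_gt h

lemma proj_pos_re {P : UTerm A n k} {u v : Fin n → A} (h : P.proj u v ≠ 0) :
    0 < (P.proj u v).re := by
  rw [proj_eq] at h ⊢
  rw [Complex.ofReal_re]
  rw [Ne, Complex.ofReal_eq_zero] at h
  exact lt_of_le_of_ne (rproj_nonneg P u v) (Ne.symm h)

lemma proj_diag_congr {P : UTerm A n k} {y w : Fin n → A} (h : ∀ q ∈ P.Q, y q = w q) :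
    P.proj y y = P.proj w w := by
  have hr : rst P.Q y = rst P.Q w := funext fun q => h q.1 q.2
  rw [proj_eq, proj_eq]
  unfold rproj
  rw [hr]
  simp

lemma proj_off_Q {P : UTerm A n k} {u v : Fin n → A} (h : P.proj u v ≠ 0) :
    ∀ q ∉ P.Q, u q = v q := by
  rw [proj_ne_iff] at h
  obtain ⟨j, _, _, hext⟩ := h
  intro q hq
  exact congrFun hext ⟨q, hq⟩

lemma step_transfer {P : UTerm A n k} {w s0 y1 : Fin n → A}
    (h : P.proj w s0 ≠ 0) (hy : ∀ q ∈ P.Q, y1 q = s0 q) :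
    P.proj y1 (fun q => if q ∈ P.Q then w q else y1 q) ≠ 0 := by
  rw [proj_ne_iff] at h ⊢
  obtain ⟨j, hwT, hsT, _⟩ := h
  refine ⟨j, ?_, ?_, ?_⟩
  · have hr : rst P.Q y1 = rst P.Q s0 := funext fun q => hy q.1 q.2
    rw [hr]; exact hsT
  · have hr : rst P.Q (fun q => if q ∈ P.Q then w q else y1 q) = rst P.Q w :=
      funext fun q => if_pos q.2
    rw [hr]; exact hwT
  · funext q
    exact (if_neg q.2).symm

/-- counted walks in `G(H)`. -/
inductive Wc (terms : Fin m → UTerm A n k) : (Fin n → A) → (Fin n → A) → ℕ → Prop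
  | refl (x) : Wc terms x x 0
  | snoc {x y z r} : Wc terms x y r → (∃ i, (terms i).proj y z ≠ 0) → Wc terms x z (r + 1)

lemma Wc.trans {terms : Fin m → UTerm A n k} {x y z : Fin n → A} {r s : ℕ}
    (h1 : Wc terms x y r) (h2 : Wc terms y z s) : Wc terms x z (r + s) := by
  induction h2 with
  | refl => exact h1
  | snoc _ step ih => exact ih.snoc step

lemma Wc.toWalkLen {terms : Fin m → UTerm A n k} {x y : Fin n → A} {r : ℕ}
    (h : Wc terms x y r) : WalkLen terms x y r := by
  induction h with
  | refl => exact ⟨fun _ => x, rfl, rfl, fun t => t.elim0⟩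
  | @snoc y z r _ step ih =>
      obtain ⟨w, hw0, hwl, hws⟩ := ih
      obtain ⟨i, hi⟩ := step
      refine ⟨Fin.snoc w z, ?_, ?_, ?_⟩
      · rw [show (0 : Fin (r + 2)) = (0 : Fin (r + 1)).castSucc from rfl, Fin.snoc_castSucc]
        exact hw0
      · exact Fin.snoc_last _ _
      · intro t
        refine Fin.lastCases ?_ ?_ t
        · rw [Fin.succ_last, Fin.snoc_last, Fin.snoc_castSucc, hwl]
          exact ⟨i, proj_pos_re hi⟩
        · intro j
          rw [Fin.succ_castSucc, Fin.snoc_castSucc, Fin.snoc_castSucc]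
          exact hws j

lemma mulVec_ne_zero {M : Matrix (Fin n → A) (Fin n → A) ℂ} {u : (Fin n → A) → ℂ}
    {w : Fin n → A} (h : M.mulVec u w ≠ 0) : ∃ s, M w s ≠ 0 ∧ u s ≠ 0 := by
  by_contra hall
  push_neg at hall
  apply h
  show M w ⬝ᵥ u = 0
  rw [dotProduct]
  apply Finset.sum_eq_zero
  intro s _
  by_cases hM : M w s = 0
  · rw [hM, zero_mul]
  · rw [hall s hM, mul_zero]

lemma layer_lemma (terms : Fin m → UTerm A n k) (hk1 : 1 ≤ k)
    (L : List (Fin m))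
    (hp : L.Pairwise (fun i i' => Disjoint (terms i).Q (terms i').Q))
    (v : (Fin n → A) → ℂ) (C : Finset (Fin n)) (w : Fin n → A)
    (hw : ((L.map fun i => (terms i).proj).prod.mulVec v) w ≠ 0) :
    ∃ (w' : Fin n → A) (C' D : Finset (Fin n)),
      v w' ≠ 0 ∧ C ⊆ C' ∧ D ⊆ C ∧
      (∀ q ∈ D, ∃ i ∈ L, q ∈ (terms i).Q) ∧
      C'.card ≤ C.card + (k - 1) * D.card ∧
      ∀ y', (∀ q ∈ C', y' q = w' q) →
        ∃ y s, s ≤ D.card ∧ (∀ q ∈ C, y q = w q) ∧ Wc terms y' y s := by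
  induction L generalizing C w with
  | nil =>
      simp only [List.map_nil, List.prod_nil, Matrix.one_mulVec] at hw
      refine ⟨w, C, ∅, hw, subset_rfl, Finset.empty_subset _, by simp, by simp, ?_⟩
      intro y' hy'
      exact ⟨y', 0, le_rfl, fun q hq => hy' q hq, Wc.refl y'⟩
  | cons i L' ih =>
      rw [List.map_cons, List.prod_cons, ← Matrix.mulVec_mulVec] at hw
      obtain ⟨s0, hproj, hrest⟩ := mulVec_ne_zero hw
      have hpc := List.pairwise_cons.mp hp
      have hdisjL : ∀ i' ∈ L', Disjoint (terms i).Q (terms i').Q := hpc.1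
      have hoff : ∀ q ∉ (terms i).Q, w q = s0 q := proj_off_Q hproj
      by_cases hQC : ∃ q0 ∈ C, q0 ∈ (terms i).Q
      · obtain ⟨q0, hq0C, hq0Q⟩ := hQC
        obtain ⟨w', C', Dt, h1, h2, h3, h4, h5, h6⟩ := ih hpc.2 (C ∪ (terms i).Q) s0 hrest
        have hDtnotQ : ∀ q ∈ Dt, q ∉ (terms i).Q := by
          intro q hq hqQ
          obtain ⟨i', hi', hqi'⟩ := h4 q hq
          exact (Finset.disjoint_left.mp (hdisjL i' hi')) hqQ hqi'
        have hDtC : Dt ⊆ C := by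
          intro q hq
          rcases Finset.mem_union.mp (h3 hq) with h | h
          · exact h
          · exact absurd h (hDtnotQ q hq)
        have hq0Dt : q0 ∉ Dt := fun hmem => hDtnotQ q0 hmem hq0Q
        refine ⟨w', C', insert q0 Dt, h1, fun q hq => h2 (Finset.mem_union_left _ hq),
          Finset.insert_subset hq0C hDtC, ?_, ?_, ?_⟩
        · intro q hq
          rcases Finset.mem_insert.mp hq with rfl | hq
          · exact ⟨i, List.mem_cons_self, hq0Q⟩
          · obtain ⟨i', hi', hqi'⟩ := h4 q hq
            exact ⟨i', List.mem_cons_of_mem _ hi', hqi'⟩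
        · rw [Finset.card_insert_of_notMem hq0Dt, Nat.mul_succ]
          have hcu : (C ∪ (terms i).Q).card + 1 ≤ C.card + k := by
            have h01 := Finset.card_union_add_card_inter C (terms i).Q
            have h02 : 1 ≤ (C ∩ (terms i).Q).card :=
              Finset.card_pos.mpr ⟨q0, Finset.mem_inter.mpr ⟨hq0C, hq0Q⟩⟩
            have h03 := (terms i).hQ
            omega
          have h5' := h5
          set xx := (k - 1) * Dt.card with hxx
          omega
        · intro y' hy'
          obtain ⟨y1, s, hs, hy1, hwalk⟩ := h6 y' hy'
          have hstep : (terms i).proj y1 (fun q => if q ∈ (terms i).Q then w q else y1 q) ≠ 0 :=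
            step_transfer hproj (fun q hq => hy1 q (Finset.mem_union_right _ hq))
          refine ⟨_, s + 1, ?_, ?_, hwalk.snoc ⟨i, hstep⟩⟩
          · rw [Finset.card_insert_of_notMem hq0Dt]
            omega
          · intro q hq
            by_cases hqQ : q ∈ (terms i).Q
            · simp only [hqQ, if_true]
            · simp only [hqQ, if_false]
              rw [hy1 q (Finset.mem_union_left _ hq), ← hoff q hqQ]
      · push_neg at hQC
        obtain ⟨w', C', D, h1, h2, h3, h4, h5, h6⟩ := ih hpc.2 C s0 hrest
        refine ⟨w', C', D, h1, h2, h3, ?_, h5, ?_⟩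
        · intro q hq
          obtain ⟨i', hi', hqi'⟩ := h4 q hq
          exact ⟨i', List.mem_cons_of_mem _ hi', hqi'⟩
        · intro y' hy'
          obtain ⟨y, s, hs, hy, hwalk⟩ := h6 y' hy'
          refine ⟨y, s, hs, fun q hq => ?_, hwalk⟩
          rw [hy q hq, ← hoff q (hQC q hq)]

lemma multi_lemma (terms : Fin m → UTerm A n k) (hk1 : 1 ≤ k)
    (Ls : List (List (Fin m)))
    (hLs : ∀ L ∈ Ls, L.Pairwise (fun i i' => Disjoint (terms i).Q (terms i').Q))
    (x : Fin n → A) (C : Finset (Fin n)) (w : Fin n → A)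
    (hw : ((Ls.flatten.map fun i => (terms i).proj).prod.mulVec (Pi.single x 1)) w ≠ 0) :
    ∃ y s, s ≤ C.card * ∑ t ∈ Finset.range Ls.length, k ^ t ∧
      (∀ q ∈ C, y q = w q) ∧ Wc terms x y s := by
  induction Ls generalizing C w with
  | nil =>
      simp only [List.flatten_nil, List.map_nil, List.prod_nil, Matrix.one_mulVec] at hw
      have hwx : w = x := by
        by_contra hne
        apply hw
        rw [Pi.single_apply, if_neg hne]
      subst hwx
      exact ⟨w, 0, Nat.zero_le _, fun q _ => rfl, Wc.refl w⟩
  | cons L Ls' ih =>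
      rw [List.flatten_cons, List.map_append, List.prod_append, ← Matrix.mulVec_mulVec] at hw
      obtain ⟨w', C', D, h1, h2, h3, h4, h5, h6⟩ :=
        layer_lemma terms hk1 L (hLs L (List.mem_cons_self)) _ C w hw
      obtain ⟨y', s', hs', hy', hwalk'⟩ := ih (fun L h => hLs L (List.mem_cons_of_mem _ h)) C' w' h1
      obtain ⟨y, s, hs, hy, hwalk⟩ := h6 y' hy'
      refine ⟨y, s' + s, ?_, hy, hwalk'.trans hwalk⟩
      have hDC : D.card ≤ C.card := Finset.card_le_card h3
      set S := ∑ t ∈ Finset.range Ls'.length, k ^ t with hS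
      have hC' : C'.card ≤ k * C.card := by
        have heq : C.card + (k - 1) * C.card = k * C.card := by
          have hk' : k - 1 + 1 = k := by omega
          calc C.card + (k - 1) * C.card = (k - 1 + 1) * C.card := by ring
          _ = k * C.card := by rw [hk']
        calc C'.card ≤ C.card + (k - 1) * D.card := h5
          _ ≤ C.card + (k - 1) * C.card := by gcongr
          _ = k * C.card := heq
      have hsum : ∑ t ∈ Finset.range (Ls'.length + 1), k ^ t = S * k + 1 := by
        rw [Finset.sum_range_succ']
        simp only [pow_succ, pow_zero, hS]
        rw [← Finset.sum_mul]
      have hlen : (L :: Ls').length = Ls'.length + 1 := rfl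
      rw [hlen, hsum]
      calc s' + s ≤ C'.card * S + C.card := Nat.add_le_add hs' (hs.trans hDC)
        _ ≤ (k * C.card) * S + C.card := by gcongr
        _ = C.card * (S * k + 1) := by ring

end Stmt13Aux

/-- Light-cone argument: if applying layers `L₁, …, L_ℓ` of non-overlapping groundspace
projectors to `|x⟩` reaches a state whose support contains a bad string, then there is a walk
in `G(H)` of length at most `Σ_{j=2}^{ℓ+1} k^j` from `x` to some bad string. -/
theorem stmt13 {A : Type} [Fintype A] [DecidableEq A] (hA : 2 ≤ Fintype.card A)
    {n k m : ℕ} (hn : 1 ≤ n) (hk : 2 ≤ k) (hm : 1 ≤ m)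
    (terms : Fin m → UTerm A n k)
    (x : Fin n → A) {ℓ : ℕ} (layers : Fin ℓ → List (Fin m))
    (hlayers : ∀ t, (layers t).Nodup ∧
      (layers t).Pairwise (fun i i' => Disjoint (terms i).Q (terms i').Q))
    (hbad : ∃ w, Bad terms w ∧
      ((((List.ofFn layers).reverse.flatten.map (fun i => (terms i).proj)).prod.mulVec
        (Pi.single x 1)) w ≠ 0)) :
    ∃ y, Bad terms y ∧ ∃ r ≤ ∑ j ∈ Finset.Icc 2 (ℓ + 1), k ^ j, WalkLen terms x y r := by
  classical
  obtain ⟨w, ⟨istar, hbadw⟩, hamp⟩ := hbad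
  have hk1 : 1 ≤ k := by omega
  set Ls := (List.ofFn layers).reverse with hLsdef
  have hLs : ∀ L ∈ Ls, L.Pairwise (fun i i' => Disjoint (terms i).Q (terms i').Q) := by
    intro L hL
    rw [hLsdef, List.mem_reverse, List.mem_ofFn] at hL
    obtain ⟨t, rfl⟩ := hL
    exact (hlayers t).2
  obtain ⟨y, s, hsle, hyw, hwalk⟩ :=
    Stmt13Aux.multi_lemma terms hk1 Ls hLs x (terms istar).Q w hamp
  refine ⟨y, ⟨istar, ?_⟩, s, ?_, hwalk.toWalkLen⟩
  · rw [Stmt13Aux.proj_diag_congr hyw]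
    exact hbadw
  · have hlen : Ls.length = ℓ := by simp [hLsdef]
    rw [hlen] at hsle
    have h1 : s ≤ k * ∑ t ∈ Finset.range ℓ, k ^ t :=
      hsle.trans (Nat.mul_le_mul_right _ (terms istar).hQ)
    have h2 : ∀ N : ℕ, ∑ j ∈ Finset.Icc 2 (N + 1), k ^ j = ∑ t ∈ Finset.range N, k ^ (t + 2) := by
      intro N
      induction N with
      | zero => simp [Finset.Icc_eq_empty_of_lt]
      | succ e ihe =>
          rw [Finset.sum_range_succ, ← ihe,
            ← Finset.sum_Icc_succ_top (by omega : 2 ≤ e + 1 + 1)]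
    calc s ≤ k * ∑ t ∈ Finset.range ℓ, k ^ t := h1
      _ = ∑ t ∈ Finset.range ℓ, k ^ (t + 1) := by
          rw [Finset.mul_sum]
          exact Finset.sum_congr rfl fun t _ => (pow_succ' k t).symm
      _ ≤ ∑ t ∈ Finset.range ℓ, k ^ (t + 2) :=
          Finset.sum_le_sum fun t _ => Nat.pow_le_pow_right hk1 (by omega)
      _ = ∑ j ∈ Finset.Icc 2 (ℓ + 1), k ^ j := (h2 ℓ).symm
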